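/- For S ⊆ ℤ and k ≥ 0, the Bhargava factorial k!_S equals gcd{a ∈ ℤ : a·f ∈ ℤ[x] for all f ∈ Int(S,ℤ) of degree k}. -/

import Mathlib

open Polynomial Finset

/-- `p`-adic valuation on ℤ, valued in `ℕ∞` with `vp p 0 = ⊤`. -/
noncomputable def vp (p : ℕ) (x : ℤ) : ℕ∞ :=
  if x = 0 then ⊤ else (padicValInt p x : ℕ∞)

/-- `u` is a `p`-ordering of `S ⊆ ℤ`. -/
def IsPOrdering (p : ℕ) (S : Set ℤ) (u : ℕ → ℤ) : Prop :=
  (∀ i, u i ∈ S) ∧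
  ∀ m, 0 < m → ∀ a ∈ S,
    vp p (∏ i ∈ Finset.range m, (u m - u i)) ≤ vp p (∏ i ∈ Finset.range m, (a - u i))

/-- `e p m` is the exponent of `p` in the Bhargava factorial `m!_S`. -/
def IsFactExp (S : Set ℤ) (e : ℕ → ℕ → ℕ) : Prop :=
  ∀ p : ℕ, p.Prime → ∀ u : ℕ → ℤ, IsPOrdering p S u →
    ∀ m, (e p m : ℕ∞) = vp p (∏ i ∈ Finset.range m, (u m - u i))

/-- `x 0, …, x k` is a `d_k`-ordering of `S`, where `e` records the exponents of the
Bhargava factorials of `S`. -/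
def IsDkOrdering (S : Set ℤ) (d : ℤ) (k : ℕ) (e : ℕ → ℕ → ℕ) (x : ℕ → ℤ) : Prop :=
  ∀ p : ℕ, p.Prime → (p : ℤ) ∣ d →
    ∃ u : ℕ → ℤ, IsPOrdering p S u ∧ ∀ i ≤ k, (p : ℤ) ^ (e p k + 1) ∣ (x i - u i)

/-- `f ∈ Int(S,ℤ)`, i.e. `f` maps `S` into `ℤ`. -/
def IsIntValued (S : Set ℤ) (f : Polynomial ℚ) : Prop :=
  ∀ a ∈ S, ∃ n : ℤ, f.eval (a : ℚ) = (n : ℚ)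

/-- The ring `Int(S,ℤ)` of integer-valued polynomials on `S`, as a subring of `ℚ[X]`. -/
noncomputable def IntPoly (S : Set ℤ) : Subring (Polynomial ℚ) where
  carrier := {f | ∀ a ∈ S, ∃ n : ℤ, f.eval (a : ℚ) = (n : ℚ)}
  mul_mem' := by
    rintro f g hf hg
    intro a ha
    obtain ⟨n, hn⟩ := hf a ha
    obtain ⟨m, hm⟩ := hg a ha
    exact ⟨n * m, by simp [hn, hm]⟩
  one_mem' := fun a _ => ⟨1, by simp⟩
  add_mem' := by
    rintro f g hf hg
    intro a ha
    obtain ⟨n, hn⟩ := hf a ha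
    obtain ⟨m, hm⟩ := hg a ha
    exact ⟨n + m, by simp [hn, hm]⟩
  zero_mem' := fun a _ => ⟨0, by simp⟩
  neg_mem' := by
    rintro f hf a ha
    obtain ⟨n, hn⟩ := hf a ha
    exact ⟨-n, by simp [hn]⟩

/-- `f` is image primitive over `S`: no prime divides `f(a)` for all `a ∈ S`. -/
def IsImagePrimitive (S : Set ℤ) (f : Polynomial ℚ) : Prop :=
  ∀ p : ℕ, p.Prime → ∃ a ∈ S, ∀ n : ℤ, f.eval (a : ℚ) ≠ (p : ℚ) * (n : ℚ)

/-- `m` is the fixed divisor `d(S,f)` of `f ∈ ℤ[X]` over `S` (gcd of values, up to sign). -/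
def IsFixedDivisor (S : Set ℤ) (f : Polynomial ℤ) (m : ℤ) : Prop :=
  (∀ b ∈ S, m ∣ f.eval b) ∧ ∀ n : ℤ, (∀ b ∈ S, n ∣ f.eval b) → n ∣ m

lemma vp_mul (p : ℕ) (hp : p.Prime) (x y : ℤ) : vp p (x * y) = vp p x + vp p y := by
  haveI : Fact p.Prime := ⟨hp⟩
  rcases eq_or_ne x 0 with rfl | hx
  · simp [vp]
  rcases eq_or_ne y 0 with rfl | hy
  · simp [vp]
  simp [vp, mul_eq_zero, hx, hy, padicValInt.mul hx hy]

lemma vp_le_iff_pow_dvd (p : ℕ) (hp : p.Prime) (n : ℕ) (x : ℤ) :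
    (n : ℕ∞) ≤ vp p x ↔ (p : ℤ) ^ n ∣ x := by
  haveI : Fact p.Prime := ⟨hp⟩
  rw [padicValInt_dvd_iff]
  rcases eq_or_ne x 0 with rfl | hx
  · simp [vp]
  · simp [vp, hx, Nat.cast_le]

lemma vp_prod (p : ℕ) (hp : p.Prime) (n : ℕ) (f : ℕ → ℤ) :
    vp p (∏ i ∈ Finset.range n, f i) = ∑ i ∈ Finset.range n, vp p (f i) := by
  induction n with
  | zero => simp [vp, padicValInt.one]
  | succ n ih => rw [Finset.prod_range_succ, vp_mul p hp, ih, Finset.sum_range_succ]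

section Facts

variable {p : ℕ} (hp : p.Prime) {S : Set ℤ} {u : ℕ → ℤ} (hu : IsPOrdering p S u)
  {e : ℕ → ℕ → ℕ} {E : ℕ → ℕ}
  (hE : ∀ m, (E m : ℕ∞) = vp p (∏ i ∈ Finset.range m, (u m - u i)))

include hE

lemma prod_ne_zero (m : ℕ) : (∏ i ∈ Finset.range m, (u m - u i)) ≠ 0 := by
  intro h
  have := hE m
  rw [h] at this
  simp [vp] at this

lemma u_injective : Function.Injective u := by
  intro i j hij
  by_contra hne
  rcases Ne.lt_or_gt (fun h : i = j => hne h) with h | h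
  · exact prod_ne_zero hE j (Finset.prod_eq_zero (Finset.mem_range.mpr h) (by rw [hij]; ring))
  · exact prod_ne_zero hE i (Finset.prod_eq_zero (Finset.mem_range.mpr h) (by rw [hij]; ring))

lemma E_zero : E 0 = 0 := by
  have := hE 0
  simp only [Finset.range_zero, Finset.prod_empty] at this
  rw [vp] at this
  simp only [one_ne_zero, if_false, padicValInt.one] at this
  exact_mod_cast this

include hu hp

lemma E_min (m : ℕ) {a : ℤ} (ha : a ∈ S) :
    (E m : ℕ∞) ≤ vp p (∏ i ∈ Finset.range m, (a - u i)) := by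
  rcases Nat.eq_zero_or_pos m with rfl | hm
  · rw [E_zero hE]; simp
  · rw [hE m]; exact hu.2 m hm a ha

lemma E_min_dvd (m : ℕ) {a : ℤ} (ha : a ∈ S) :
    (p : ℤ) ^ (E m) ∣ ∏ i ∈ Finset.range m, (a - u i) :=
  (vp_le_iff_pow_dvd p hp _ _).mp (E_min hp hu hE m ha)

lemma E_mono : Monotone E := by
  refine monotone_nat_of_le_succ fun m => ?_
  have h1 : (E m : ℕ∞) ≤ vp p (∏ i ∈ Finset.range m, (u (m+1) - u i)) :=
    E_min hp hu hE m (hu.1 (m+1))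
  have h2 : vp p (∏ i ∈ Finset.range (m+1), (u (m+1) - u i)) =
      vp p (∏ i ∈ Finset.range m, (u (m+1) - u i)) + vp p (u (m+1) - u m) := by
    rw [Finset.prod_range_succ, vp_mul p hp]
  have : (E m : ℕ∞) ≤ (E (m+1) : ℕ∞) := by
    rw [hE (m+1), h2]
    exact le_trans h1 le_self_add
  exact_mod_cast this

lemma E_exact (m : ℕ) :
    ∃ w : ℤ, ¬(p : ℤ) ∣ w ∧ (∏ i ∈ Finset.range m, (u m - u i)) = (p : ℤ) ^ (E m) * w := by
  haveI : Fact p.Prime := ⟨hp⟩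
  set B := ∏ i ∈ Finset.range m, (u m - u i) with hB
  have hB0 : B ≠ 0 := prod_ne_zero hE m
  have hval : padicValInt p B = E m := by
    have := hE m
    rw [vp, if_neg hB0] at this
    exact_mod_cast this.symm
  obtain ⟨w, hw⟩ : (p : ℤ) ^ (E m) ∣ B := by rw [← hval]; exact padicValInt_dvd B
  refine ⟨w, fun hdvd => ?_, hw⟩
  obtain ⟨t, ht⟩ := hdvd
  have : (p : ℤ) ^ (E m + 1) ∣ B := ⟨t, by rw [hw, ht, pow_succ]; ring⟩
  rw [padicValInt_dvd_iff] at this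
  rcases this with h | h
  · exact hB0 h
  · omega

end Facts

noncomputable def newtonC (f : Polynomial ℚ) (u : ℕ → ℤ) : ℕ → ℚ
  | m => (f.eval ((u m : ℤ) : ℚ) -
      ∑ i ∈ (Finset.range m).attach,
        newtonC f u i * ∏ j ∈ Finset.range (i : ℕ), (((u m : ℤ) : ℚ) - ((u j : ℤ) : ℚ))) /
    ∏ j ∈ Finset.range m, (((u m : ℤ) : ℚ) - ((u j : ℤ) : ℚ))
  decreasing_by exact Finset.mem_range.mp i.2

lemma newtonC_def (f : Polynomial ℚ) (u : ℕ → ℤ) (m : ℕ) :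
    newtonC f u m = (f.eval ((u m : ℤ) : ℚ) -
      ∑ i ∈ Finset.range m,
        newtonC f u i * ∏ j ∈ Finset.range i, (((u m : ℤ) : ℚ) - ((u j : ℤ) : ℚ))) /
    ∏ j ∈ Finset.range m, (((u m : ℤ) : ℚ) - ((u j : ℤ) : ℚ)) := by
  rw [newtonC]
  congr 2
  exact Finset.sum_attach (Finset.range m) (fun i => newtonC f u i * ∏ j ∈ Finset.range i, (((u m : ℤ) : ℚ) - ((u j : ℤ) : ℚ)))

lemma exists_min_vp (p : ℕ) (S : Set ℤ) (hS : S.Nonempty) (l : List ℤ) :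
    ∃ a ∈ S, ∀ b ∈ S, vp p ((l.map (a - ·)).prod) ≤ vp p ((l.map (b - ·)).prod) := by
  set T : Set ℕ∞ := (fun a => vp p ((l.map (a - ·)).prod)) '' S with hT
  have hTne : T.Nonempty := hS.image _
  obtain ⟨t, htT, htmin⟩ := wellFounded_lt.has_min T hTne
  obtain ⟨a, haS, rfl⟩ := htT
  exact ⟨a, haS, fun b hb => not_lt.1 (htmin _ ⟨b, hb, rfl⟩)⟩

noncomputable def pick (p : ℕ) (S : Set ℤ) (hS : S.Nonempty) (l : List ℤ) : ℤ :=
  (exists_min_vp p S hS l).choose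

lemma pick_mem (p : ℕ) (S : Set ℤ) (hS : S.Nonempty) (l : List ℤ) : pick p S hS l ∈ S :=
  (exists_min_vp p S hS l).choose_spec.1

lemma pick_min (p : ℕ) (S : Set ℤ) (hS : S.Nonempty) (l : List ℤ) :
    ∀ b ∈ S, vp p ((l.map (pick p S hS l - ·)).prod) ≤ vp p ((l.map (b - ·)).prod) :=
  (exists_min_vp p S hS l).choose_spec.2

noncomputable def pvec (p : ℕ) (S : Set ℤ) (hS : S.Nonempty) : ℕ → List ℤ
  | 0 => []
  | m + 1 => pvec p S hS m ++ [pick p S hS (pvec p S hS m)]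

noncomputable def pOrd (p : ℕ) (S : Set ℤ) (hS : S.Nonempty) (m : ℕ) : ℤ :=
  pick p S hS (pvec p S hS m)

lemma pvec_eq (p : ℕ) (S : Set ℤ) (hS : S.Nonempty) (m : ℕ) :
    pvec p S hS m = (List.range m).map (pOrd p S hS) := by
  induction m with
  | zero => simp [pvec]
  | succ m ih => rw [pvec, ih, List.range_succ, List.map_append, List.map_singleton, pOrd, ih]

lemma prod_pvec (p : ℕ) (S : Set ℤ) (hS : S.Nonempty) (m : ℕ) (a : ℤ) :
    ((pvec p S hS m).map (a - ·)).prod = ∏ i ∈ Finset.range m, (a - pOrd p S hS i) := by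
  rw [pvec_eq, List.map_map]
  induction m with
  | zero => simp
  | succ m ih =>
    rw [List.range_succ, List.map_append, List.prod_append, Finset.prod_range_succ, ih]
    simp

lemma pOrd_isPOrdering (p : ℕ) (S : Set ℤ) (hS : S.Nonempty) :
    IsPOrdering p S (pOrd p S hS) := by
  constructor
  · exact fun i => pick_mem p S hS _
  · intro m _ a ha
    have := pick_min p S hS (pvec p S hS m) a ha
    rwa [prod_pvec, prod_pvec] at this

lemma prime_not_dvd_one {p : ℕ} (hp : p.Prime) : ¬(p : ℤ) ∣ 1 := by
  intro h
  exact hp.one_lt.ne' (by exact_mod_cast Int.eq_one_of_dvd_one (by positivity) h)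

/-- Rationals writable as a/b with p ∤ b. -/
def Zloc (p : ℕ) (hp : p.Prime) : Subring ℚ where
  carrier := {q | ∃ a b : ℤ, ¬(p : ℤ) ∣ b ∧ q * b = a}
  zero_mem' := ⟨0, 1, prime_not_dvd_one hp, by norm_num⟩
  one_mem' := ⟨1, 1, prime_not_dvd_one hp, by norm_num⟩
  add_mem' := by
    rintro x y ⟨a, b, hb, hab⟩ ⟨c, d, hd, hcd⟩
    refine ⟨a * d + c * b, b * d, fun h => ?_, ?_⟩
    · rcases (Int.Prime.dvd_mul' hp h) with h | h
      exacts [hb h, hd h]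
    · push_cast
      rw [add_mul, ← hab, ← hcd]; ring
  mul_mem' := by
    rintro x y ⟨a, b, hb, hab⟩ ⟨c, d, hd, hcd⟩
    refine ⟨a * c, b * d, fun h => ?_, ?_⟩
    · rcases (Int.Prime.dvd_mul' hp h) with h | h
      exacts [hb h, hd h]
    · push_cast
      rw [← hab, ← hcd]; ring
  neg_mem' := by
    rintro x ⟨a, b, hb, hab⟩
    exact ⟨-a, b, hb, by push_cast; rw [neg_mul, hab]⟩

lemma intCast_mem_Zloc (p : ℕ) (hp : p.Prime) (n : ℤ) : (n : ℚ) ∈ Zloc p hp :=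
  ⟨n, 1, prime_not_dvd_one hp, by norm_num⟩

lemma inv_mem_Zloc (p : ℕ) (hp : p.Prime) (w : ℤ) (hw : ¬(p : ℤ) ∣ w) :
    ((w : ℚ))⁻¹ ∈ Zloc p hp := by
  have hw0 : w ≠ 0 := by rintro rfl; exact hw (dvd_zero _)
  exact ⟨1, w, hw, by
    rw [inv_mul_cancel₀]
    · norm_num
    · exact_mod_cast hw0⟩

lemma den_dvd_of_mem_Zloc (p : ℕ) (hp : p.Prime) (r : ℚ) (h : r ∈ Zloc p hp) :
    ¬ (p ∣ r.den) := by
  obtain ⟨a, b, hb, hab⟩ := h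
  intro hpd
  apply hb
  have hb0' : b ≠ 0 := fun h0 => hb (h0 ▸ dvd_zero _)
  have hb0 : (b : ℚ) ≠ 0 := by exact_mod_cast hb0'
  have hr : r = Rat.divInt a b := by
    rw [Rat.divInt_eq_div]
    field_simp [← hab]
    exact hab
  have := Rat.den_dvd a b
  rw [← hr] at this
  exact dvd_trans (Int.natCast_dvd_natCast.mpr hpd) this

/-- extraction: if for every prime `p`, `p^(v_p N) * q ∈ Zloc p`, then `N * q ∈ ℤ`. -/
lemma exists_int_of_forall_Zloc (N : ℕ) (hN : N ≠ 0) (q : ℚ)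
    (h : ∀ p : ℕ, (hp : p.Prime) → ((p : ℚ) ^ (padicValNat p N) * q) ∈ Zloc p hp) :
    ∃ n : ℤ, (N : ℚ) * q = (n : ℚ) := by
  set r : ℚ := (N : ℚ) * q with hr
  refine ⟨r.num, ?_⟩
  have hden : r.den = 1 := by
    by_contra hd
    obtain ⟨p, hp, hpd⟩ := Nat.exists_prime_and_dvd hd
    refine den_dvd_of_mem_Zloc p hp r ?_ hpd
    set v := padicValNat p N with hv
    obtain ⟨M, hM⟩ : (p : ℕ) ^ v ∣ N := pow_padicValNat_dvd
    have : r = (M : ℚ) * ((p : ℚ) ^ v * q) := by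
      rw [hr, hM]; push_cast; ring
    rw [this]
    exact mul_mem (intCast_mem_Zloc p hp M) (h p hp)
  rw [← Rat.num_div_den r, hden]; norm_num

lemma coeff_bound (S : Set ℤ) (hS : S.Nonempty) (k : ℕ) (e : ℕ → ℕ → ℕ) (he : IsFactExp S e)
    (p : ℕ) (hp : p.Prime) (f : Polynomial ℚ)
    (hf : ∀ a ∈ S, ∃ n : ℤ, f.eval ((a : ℤ) : ℚ) = (n : ℚ)) (hdeg : f.natDegree = k) (j : ℕ) :
    (p : ℚ) ^ (e p k) * f.coeff j ∈ Zloc p hp := by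
  set u := pOrd p S hS with hu_def
  have hu : IsPOrdering p S u := pOrd_isPOrdering p S hS
  have hE : ∀ m, ((e p) m : ℕ∞) = vp p (∏ i ∈ Finset.range m, (u m - u i)) := he p hp u hu
  set c := newtonC f u with hc
  have hp0 : (p : ℚ) ≠ 0 := by exact_mod_cast hp.ne_zero
  have hDne : ∀ m, (∏ j ∈ Finset.range m, (((u m : ℤ) : ℚ) - ((u j : ℤ) : ℚ))) ≠ 0 := by
    intro m
    have h1 : (∏ j ∈ Finset.range m, (((u m : ℤ) : ℚ) - ((u j : ℤ) : ℚ)))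
        = ((∏ j ∈ Finset.range m, (u m - u j) : ℤ) : ℚ) := by push_cast; rfl
    rw [h1]
    exact_mod_cast prod_ne_zero hE m
  -- claim 1 : p-integrality of Newton coefficients
  have claim1 : ∀ m, (p : ℚ) ^ (e p m) * c m ∈ Zloc p hp := by
    intro m
    induction m using Nat.strong_induction_on with
    | _ m ih =>
      obtain ⟨w, hw, hBw⟩ := E_exact hp hu hE m
      have hw0 : (w : ℚ) ≠ 0 := by
        exact_mod_cast fun h0 : w = 0 => hw (h0 ▸ dvd_zero _)
      have hD : (∏ j ∈ Finset.range m, (((u m : ℤ) : ℚ) - ((u j : ℤ) : ℚ)))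
          = (p : ℚ) ^ (e p m) * (w : ℚ) := by
        have h1 : (∏ j ∈ Finset.range m, (((u m : ℤ) : ℚ) - ((u j : ℤ) : ℚ)))
            = ((∏ j ∈ Finset.range m, (u m - u j) : ℤ) : ℚ) := by push_cast; rfl
        rw [h1, hBw]; push_cast; ring
      have hRHS : (f.eval ((u m : ℤ) : ℚ) -
          ∑ i ∈ Finset.range m,
            c i * ∏ j ∈ Finset.range i, (((u m : ℤ) : ℚ) - ((u j : ℤ) : ℚ))) ∈ Zloc p hp := by
        refine sub_mem ?_ (sum_mem fun i hi => ?_)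
        · obtain ⟨n, hn⟩ := hf (u m) (hu.1 m)
          rw [hn]; exact intCast_mem_Zloc p hp n
        · obtain ⟨t, ht⟩ := E_min_dvd hp hu hE i (hu.1 m)
          have h2 : (∏ j ∈ Finset.range i, (((u m : ℤ) : ℚ) - ((u j : ℤ) : ℚ)))
              = ((p : ℚ)) ^ (e p i) * (t : ℚ) := by
            have h1 : (∏ j ∈ Finset.range i, (((u m : ℤ) : ℚ) - ((u j : ℤ) : ℚ)))
                = ((∏ j ∈ Finset.range i, (u m - u j) : ℤ) : ℚ) := by push_cast; rfl
            rw [h1, ht]; push_cast; ring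
          rw [h2, show c i * ((p : ℚ) ^ (e p i) * (t : ℚ))
              = ((p : ℚ) ^ (e p i) * c i) * (t : ℚ) by ring]
          exact mul_mem (ih i (Finset.mem_range.mp hi)) (intCast_mem_Zloc p hp t)
      have hcm : (p : ℚ) ^ (e p m) * c m = (f.eval ((u m : ℤ) : ℚ) -
          ∑ i ∈ Finset.range m,
            c i * ∏ j ∈ Finset.range i, (((u m : ℤ) : ℚ) - ((u j : ℤ) : ℚ))) * ((w : ℚ))⁻¹ := by
        rw [hc, newtonC_def, hD]
        field_simp
      rw [hcm]
      exact mul_mem hRHS (inv_mem_Zloc p hp w hw)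
  -- claim 2 : interpolation identity at the points u 0, ..., u m
  have claim2 : ∀ m, f.eval ((u m : ℤ) : ℚ) =
      ∑ i ∈ Finset.range (m + 1),
        c i * ∏ j ∈ Finset.range i, (((u m : ℤ) : ℚ) - ((u j : ℤ) : ℚ)) := by
    intro m
    rw [Finset.sum_range_succ]
    have h1 : c m * (∏ j ∈ Finset.range m, (((u m : ℤ) : ℚ) - ((u j : ℤ) : ℚ)))
        = f.eval ((u m : ℤ) : ℚ) - ∑ i ∈ Finset.range m,
            c i * ∏ j ∈ Finset.range i, (((u m : ℤ) : ℚ) - ((u j : ℤ) : ℚ)) := by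
      rw [hc, newtonC_def, div_mul_cancel₀ _ (hDne m)]
    rw [h1]; ring
  -- claim 3 : Newton expansion of f
  have claim3 : f = ∑ i ∈ Finset.range (k + 1),
      C (c i) * ∏ j ∈ Finset.range i, (X - C ((u j : ℤ) : ℚ)) := by
    have hBqeval : ∀ i m, (∏ j ∈ Finset.range i, (X - C ((u j : ℤ) : ℚ))).eval ((u m : ℤ) : ℚ)
        = ∏ j ∈ Finset.range i, (((u m : ℤ) : ℚ) - ((u j : ℤ) : ℚ)) := by
      intro i m
      rw [eval_prod]
      exact Finset.prod_congr rfl fun j _ => by simp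
    set g := f - ∑ i ∈ Finset.range (k + 1),
      C (c i) * ∏ j ∈ Finset.range i, (X - C ((u j : ℤ) : ℚ)) with hg
    have hgdeg : g.natDegree < k + 1 := by
      have h1 : (∑ i ∈ Finset.range (k + 1),
          C (c i) * ∏ j ∈ Finset.range i, (X - C ((u j : ℤ) : ℚ))).natDegree ≤ k := by
        refine Polynomial.natDegree_sum_le_of_forall_le _ _ fun i hi => ?_
        refine le_trans (Polynomial.natDegree_mul_le) ?_
        rw [Polynomial.natDegree_C]
        have h2 : (∏ j ∈ Finset.range i, (X - C ((u j : ℤ) : ℚ))).natDegree ≤ i := by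
          refine le_trans (Polynomial.natDegree_prod_le _ _) (le_trans
            (Finset.sum_le_sum fun j _ => Polynomial.natDegree_X_sub_C_le ((u j : ℤ) : ℚ))
            (by simp))
        have hik : i ≤ k := by
          have := Finset.mem_range.mp hi; omega
        omega
      have := Polynomial.natDegree_sub_le f (∑ i ∈ Finset.range (k + 1),
          C (c i) * ∏ j ∈ Finset.range i, (X - C ((u j : ℤ) : ℚ)))
      rw [hdeg] at this
      have h4 : g.natDegree ≤ k := le_trans this (max_le le_rfl h1)
      omega
    have hgeval : ∀ m : Fin (k + 1), g.eval ((u (m : ℕ) : ℤ) : ℚ) = 0 := by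
      intro m
      rw [hg, eval_sub, eval_finset_sum]
      have h3 : ∀ i ∈ Finset.range (k + 1),
          (C (c i) * ∏ j ∈ Finset.range i, (X - C ((u j : ℤ) : ℚ))).eval ((u (m : ℕ) : ℤ) : ℚ)
          = c i * ∏ j ∈ Finset.range i, (((u (m : ℕ) : ℤ) : ℚ) - ((u j : ℤ) : ℚ)) := by
        intro i _
        rw [eval_mul, eval_C, hBqeval]
      rw [Finset.sum_congr rfl h3]
      have hsub : Finset.range ((m : ℕ) + 1) ⊆ Finset.range (k + 1) := by
        apply Finset.range_subset_range.mpr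
        omega
      rw [← Finset.sum_subset hsub ?_, ← claim2 (m : ℕ), sub_self]
      intro i hik him
      have hmi : (m : ℕ) < i := by
        simp only [Finset.mem_range] at hik him
        omega
      have : (((u (m : ℕ) : ℤ) : ℚ) - ((u (m : ℕ) : ℤ) : ℚ)) = 0 := sub_self _
      rw [Finset.prod_eq_zero (Finset.mem_range.mpr hmi) this, mul_zero]
    have hinj : Function.Injective fun m : Fin (k + 1) => ((u (m : ℕ) : ℤ) : ℚ) := by
      intro a b hab
      have hab' : ((u (a : ℕ) : ℤ) : ℚ) = ((u (b : ℕ) : ℤ) : ℚ) := hab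
      have hab'' : u (a : ℕ) = u (b : ℕ) := by exact_mod_cast hab'
      exact Fin.ext (u_injective hE hab'')
    have hg0 : g = 0 := by
      refine Polynomial.eq_zero_of_natDegree_lt_card_of_eval_eq_zero g hinj hgeval ?_
      simpa using hgdeg
    exact sub_eq_zero.mp hg0
  -- conclude
  have hmono : ∀ i ≤ k, e p i ≤ e p k := fun i hi => E_mono hp hu hE hi
  have hcoeff : f.coeff j = ∑ i ∈ Finset.range (k + 1),
      c i * (((∏ l ∈ Finset.range i, (X - Polynomial.C (u l)) : Polynomial ℤ).coeff j : ℤ) : ℚ) := by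
    conv_lhs => rw [claim3]
    rw [Polynomial.finset_sum_coeff]
    refine Finset.sum_congr rfl fun i _ => ?_
    rw [Polynomial.coeff_C_mul]
    congr 1
    have hmap : (∏ l ∈ Finset.range i, (X - Polynomial.C ((u l : ℤ) : ℚ)))
        = ((∏ l ∈ Finset.range i, (X - Polynomial.C (u l)) : Polynomial ℤ).map
            (Int.castRingHom ℚ)) := by
      rw [Polynomial.map_prod]
      refine Finset.prod_congr rfl fun l _ => ?_
      rw [Polynomial.map_sub, Polynomial.map_X, Polynomial.map_C]
      norm_num
    rw [hmap, Polynomial.coeff_map]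
    rfl
  rw [hcoeff, Finset.mul_sum]
  refine sum_mem fun i hi => ?_
  have hik : i ≤ k := by
    have := Finset.mem_range.mp hi; omega
  have hpow : (p : ℚ) ^ (e p k) = (p : ℚ) ^ (e p k - e p i) * (p : ℚ) ^ (e p i) := by
    rw [← pow_add, Nat.sub_add_cancel (hmono i hik)]
  rw [show (p : ℚ) ^ (e p k) * (c i *
      (((∏ l ∈ Finset.range i, (X - Polynomial.C (u l)) : Polynomial ℤ).coeff j : ℤ) : ℚ))
      = ((p : ℚ) ^ (e p k - e p i)) * ((p : ℚ) ^ (e p i) * c i) *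
      (((∏ l ∈ Finset.range i, (X - Polynomial.C (u l)) : Polynomial ℤ).coeff j : ℤ) : ℚ) by
    rw [hpow]; ring]
  have hppow : ((p : ℚ)) ^ (e p k - e p i) ∈ Zloc p hp := by
    have : ((p : ℚ)) ^ (e p k - e p i) = (((p : ℤ) ^ (e p k - e p i) : ℤ) : ℚ) := by push_cast; rfl
    rw [this]
    exact intCast_mem_Zloc p hp _
  exact mul_mem (mul_mem hppow (claim1 i)) (intCast_mem_Zloc p hp _)

lemma exists_intPoly (F : Polynomial ℚ) (h : ∀ j, ∃ n : ℤ, F.coeff j = (n : ℚ)) :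
    ∃ g : Polynomial ℤ, F = g.map (Int.castRingHom ℚ) := by
  choose n hn using h
  refine ⟨∑ j ∈ F.support, Polynomial.C (n j) * Polynomial.X ^ j, ?_⟩
  rw [Polynomial.map_sum]
  conv_lhs => rw [F.as_sum_support]
  refine Finset.sum_congr rfl fun j _ => ?_
  rw [Polynomial.map_mul, Polynomial.map_pow, Polynomial.map_C, Polynomial.map_X,
    ← Polynomial.C_mul_X_pow_eq_monomial]
  rw [hn j]
  rfl

lemma crt_primes (s : Finset ℕ) (hs : ∀ p ∈ s, p.Prime) (a : ℕ → ℕ) (r : ℕ → ℤ) :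
    ∃ x : ℤ, ∀ p ∈ s, (p : ℤ) ^ (a p) ∣ (x - r p) := by
  classical
  induction s using Finset.induction_on with
  | empty => exact ⟨0, by simp⟩
  | @insert q s hq ih =>
    obtain ⟨y, hy⟩ := ih fun p hp => hs p (Finset.mem_insert_of_mem hp)
    set M : ℕ := ∏ p ∈ s, p ^ (a p) with hM
    have hqp : q.Prime := hs q (Finset.mem_insert_self q s)
    have hcop : Nat.Coprime (q ^ (a q)) M := by
      refine Nat.Coprime.pow_left _ (Nat.Coprime.prod_right fun p hp => ?_)
      exact Nat.Coprime.pow_right _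
        ((Nat.coprime_primes hqp (hs p (Finset.mem_insert_of_mem hp))).mpr
          (fun h => hq (h ▸ hp)))
    have hic : IsCoprime ((q : ℤ) ^ (a q)) ((M : ℕ) : ℤ) := by
      have := Nat.isCoprime_iff_coprime.mpr hcop
      push_cast at this
      exact_mod_cast this
    obtain ⟨c, d, hcd⟩ := hic
    refine ⟨r q * d * M + y * c * (q : ℤ) ^ (a q), fun p hp => ?_⟩
    rcases Finset.mem_insert.mp hp with rfl | hps
    · exact ⟨c * y - c * r p, by linear_combination (r p) * hcd⟩
    · have hMd : ((p : ℤ)) ^ (a p) ∣ (M : ℤ) := by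
        have : p ^ (a p) ∣ M := Finset.dvd_prod_of_mem (fun p => p ^ (a p)) hps
        exact_mod_cast Int.natCast_dvd_natCast.mpr this
      have h1 : (r q * d * M + y * c * (q : ℤ) ^ (a q)) - r p
          = ((r q - y) * d) * (M : ℤ) + (y - r p) := by linear_combination y * hcd
      rw [h1]
      exact dvd_add (Dvd.dvd.mul_left hMd _) (hy p hps)

lemma pow_dvd_prod_sub {p : ℕ} (hp : p.Prime) {S : Set ℤ} {u : ℕ → ℤ}
    (hu : IsPOrdering p S u) {E : ℕ → ℕ}
    (hE : ∀ m, (E m : ℕ∞) = vp p (∏ i ∈ Finset.range m, (u m - u i)))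
    (k : ℕ) {b : ℤ} (hb : b ∈ S) {x : ℕ → ℤ}
    (hx : ∀ i, (p : ℤ) ^ (E k + 1) ∣ (x i - u i)) :
    (p : ℤ) ^ (E k) ∣ ∏ i ∈ Finset.range k, (b - x i) := by
  by_cases H : ∃ i ∈ Finset.range k, (p : ℤ) ^ (E k + 1) ∣ (b - u i)
  · obtain ⟨i, hi, hdvd⟩ := H
    have h1 : (p : ℤ) ^ (E k + 1) ∣ (b - x i) := by
      have := dvd_sub hdvd (hx i)
      have h2 : b - u i - (x i - u i) = b - x i := by ring
      rwa [h2] at this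
    exact dvd_trans (dvd_trans (pow_dvd_pow _ (Nat.le_succ _)) h1)
      (Finset.dvd_prod_of_mem _ hi)
  · push_neg at H
    rw [← vp_le_iff_pow_dvd p hp]
    calc (E k : ℕ∞) ≤ vp p (∏ i ∈ Finset.range k, (b - u i)) := E_min hp hu hE k hb
      _ = ∑ i ∈ Finset.range k, vp p (b - u i) := vp_prod p hp k _
      _ ≤ ∑ i ∈ Finset.range k, vp p (b - x i) := ?_
      _ = vp p (∏ i ∈ Finset.range k, (b - x i)) := (vp_prod p hp k _).symm
    refine Finset.sum_le_sum fun i hi => ?_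
    have hnd := H i hi
    rw [← vp_le_iff_pow_dvd p hp] at hnd
    have hlt : vp p (b - u i) < ((E k + 1 : ℕ) : ℕ∞) := not_le.mp hnd
    obtain ⟨n, hn, hnle⟩ := WithTop.le_coe_iff.mp (le_of_lt hlt)
    rw [show (WithTop.some n : ℕ∞) = (n : ℕ∞) from rfl] at hn
    have hnlt : n < E k + 1 := by exact_mod_cast hn ▸ hlt
    have h3 : (p : ℤ) ^ n ∣ (b - u i) := by
      rw [← vp_le_iff_pow_dvd p hp, hn]
    have h4 : (p : ℤ) ^ n ∣ (x i - u i) :=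
      dvd_trans (pow_dvd_pow _ (by omega)) (hx i)
    have h5 : (p : ℤ) ^ n ∣ (b - x i) := by
      have := dvd_sub h3 h4
      have h2 : b - u i - (x i - u i) = b - x i := by ring
      rwa [h2] at this
    rw [hn, vp_le_iff_pow_dvd p hp]
    exact h5

/-- the Bhargava factorial `k!_S` (the positive integer `N` whose `p`-adic
valuation is `e p k` for all primes `p`) equals
`gcd {a : a·f ∈ ℤ[X] for all f ∈ Int(S,ℤ) of degree k}`. -/
theorem stmt11 (S : Set ℤ) (hS : S.Nonempty) (k : ℕ)
    (e : ℕ → ℕ → ℕ) (he : IsFactExp S e)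
    (N : ℕ) (hN : N ≠ 0) (hfact : ∀ p : ℕ, p.Prime → padicValNat p N = e p k) :
    (∀ a : ℤ,
        (∀ f : Polynomial ℚ, IsIntValued S f → f.natDegree = k →
          ∃ g : Polynomial ℤ, (a : ℚ) • f = g.map (Int.castRingHom ℚ)) →
        (N : ℤ) ∣ a) ∧
      ∀ m : ℤ,
        (∀ a : ℤ,
          (∀ f : Polynomial ℚ, IsIntValued S f → f.natDegree = k →
            ∃ g : Polynomial ℤ, (a : ℚ) • f = g.map (Int.castRingHom ℚ)) →
          m ∣ a) →
        m ∣ (N : ℤ) := by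
  have hN0 : (N : ℚ) ≠ 0 := by exact_mod_cast hN
  have hNfac : (N : ℤ) = ∏ p ∈ N.primeFactors, (p : ℤ) ^ (e p k) := by
    have h1 : N = ∏ p ∈ N.primeFactors, p ^ (e p k) := by
      conv_lhs => rw [← Nat.factorization_prod_pow_eq_self hN]
      rw [Finsupp.prod, Nat.support_factorization]
      refine Finset.prod_congr rfl fun p hp => ?_
      rw [Nat.factorization_def N (Nat.prime_of_mem_primeFactors hp),
        hfact p (Nat.prime_of_mem_primeFactors hp)]
    conv_lhs => rw [h1]
    push_cast
    rfl
  constructor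
  · -- N divides every such a
    intro a ha
    have hx : ∀ i : ℕ, ∃ x : ℤ, ∀ p ∈ N.primeFactors,
        (p : ℤ) ^ (e p k + 1) ∣ (x - pOrd p S hS i) := fun i =>
      crt_primes N.primeFactors (fun p hp => Nat.prime_of_mem_primeFactors hp)
        (fun p => e p k + 1) (fun p => pOrd p S hS i)
    choose x hx using hx
    set g : Polynomial ℤ := ∏ i ∈ Finset.range k, (X - Polynomial.C (x i)) with hgdef
    have hgmonic : g.Monic := monic_prod_of_monic _ _ fun i _ => monic_X_sub_C _
    have hgdeg : g.natDegree = k := by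
      rw [hgdef, Polynomial.natDegree_prod_of_monic _ _ fun i _ => monic_X_sub_C _]
      refine Eq.trans (Finset.sum_congr rfl fun i _ => Polynomial.natDegree_X_sub_C (x i))
        (by simp)
    have hgeval : ∀ b : ℤ, g.eval b = ∏ i ∈ Finset.range k, (b - x i) := by
      intro b; rw [hgdef, eval_prod]; simp
    have hdvd : ∀ b ∈ S, (N : ℤ) ∣ g.eval b := by
      intro b hb
      rw [hgeval, hNfac]
      refine Finset.prod_dvd_of_coprime ?_ fun p hp => ?_
      · intro p hp q hq hne
        have hpp := Nat.prime_of_mem_primeFactors hp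
        have hqp := Nat.prime_of_mem_primeFactors hq
        refine IsCoprime.pow ?_
        have := Nat.isCoprime_iff_coprime.mpr ((Nat.coprime_primes hpp hqp).mpr hne)
        exact_mod_cast this
      · have hpp := Nat.prime_of_mem_primeFactors hp
        exact pow_dvd_prod_sub hpp (pOrd_isPOrdering p S hS)
          (he p hpp _ (pOrd_isPOrdering p S hS)) k hb (fun i => hx i p hp)
    set f₀ : Polynomial ℚ := Polynomial.C ((N : ℚ))⁻¹ * g.map (Int.castRingHom ℚ) with hf₀
    have hmapdeg : (g.map (Int.castRingHom ℚ)).natDegree = k := by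
      rw [hgmonic.natDegree_map]; exact hgdeg
    have hf₀deg : f₀.natDegree = k := by
      rw [hf₀, Polynomial.natDegree_C_mul (inv_ne_zero hN0), hmapdeg]
    have hf₀int : IsIntValued S f₀ := by
      intro b hb
      obtain ⟨t, ht⟩ := hdvd b hb
      refine ⟨t, ?_⟩
      rw [hf₀, eval_mul, eval_C, Polynomial.eval_intCast_map, Int.cast_id, ht]
      simp only [map_mul, map_intCast, eq_intCast]
      field_simp
      norm_cast
    obtain ⟨h, hh⟩ := ha f₀ hf₀int hf₀deg
    have hck : ((a : ℚ) • f₀).coeff k = (a : ℚ) * ((N : ℚ))⁻¹ := by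
      rw [Polynomial.coeff_smul, hf₀, Polynomial.coeff_C_mul]
      have : (g.map (Int.castRingHom ℚ)).coeff k = 1 := by
        have hm : (g.map (Int.castRingHom ℚ)).Monic := hgmonic.map _
        have := hm.coeff_natDegree
        rwa [hmapdeg] at this
      rw [this]
      simp [mul_comm]
    have hck2 : ((a : ℚ)) * ((N : ℚ))⁻¹ = ((h.coeff k : ℤ) : ℚ) := by
      rw [← hck, hh, Polynomial.coeff_map]
      rfl
    have hfin : (a : ℚ) = ((N * h.coeff k : ℤ) : ℚ) := by
      push_cast
      rw [← hck2]
      field_simp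
    exact ⟨h.coeff k, by exact_mod_cast hfin⟩
  · -- maximality
    intro m hm
    apply hm
    intro f hf hdeg
    apply exists_intPoly
    intro j
    have hz : ∀ p : ℕ, (hp : p.Prime) →
        ((p : ℚ) ^ (padicValNat p N) * f.coeff j) ∈ Zloc p hp := by
      intro p hp
      rw [hfact p hp]
      exact coeff_bound S hS k e he p hp f hf hdeg j
    obtain ⟨n, hn⟩ := exists_int_of_forall_Zloc N hN (f.coeff j) hz
    refine ⟨n, ?_⟩
    rw [Polynomial.coeff_smul, smul_eq_mul, ← hn]
    push_cast
    ring
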